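/- Let J be a finite index set, r ∉ J, a : J → ℝ with a_j ≥ 0 for all j ∈ J, b ∈ ℝ, and P ⊆ J. Let P_W := {j ∈ P : a_j ∉ ℤ} and P_Z := P ∖ P_W. Set b̃ := b − Σ_{j∈P} a_j and assume 0 < b̃ < 1. With f(t) := t − ⌊t⌋, define ψ(t) := ⌊t⌋ + min(1, f(t)/f(b̃)) and ψ_w(t) := ⌊t⌋ + min(1, f(t)/f(b − Σ_{j∈P_W} a_j)). Then every x ∈ ℝ^{J ∪ {r}} with 0 ≤ x_j ≤ 1 for all j ∈ J ∪ {r} that satisfies the cMIR constraint x_r + Σ_{j∈J∖P} ψ(a_j)·x_j − Σ_{j∈P} ψ(−a_j)·x_j ≥ 1 − Σ_{j∈P} ψ(−a_j) also satisfies the wMIR constraint x_r + Σ_{j∈P_Z} a_j·x_j + Σ_{j∈J∖P} ψ_w(a_j)·x_j ≥ ⌈b − Σ_{j∈P_W} a_j⌉. -/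
import Mathlib


/-- Proposition 4 (dominance): every point within the bounds `[0,1]` satisfying
the cMIR constraint also satisfies the wMIR constraint. -/
theorem cMIR_dominates_wMIR
    {ι : Type*} [DecidableEq ι] (J : Finset ι) (r : ι) (hr : r ∉ J)
    (a : ι → ℝ) (ha : ∀ j ∈ J, 0 ≤ a j) (b : ℝ)
    (P : Finset ι) (hP : P ⊆ J)
    (PW PZ : Finset ι)
    (hPWsub : PW ⊆ P)
    (hPWspec : ∀ j ∈ P, (j ∈ PW ↔ ¬ ∃ z : ℤ, a j = (z : ℝ)))
    (hPZ : PZ = P \ PW)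
    (btil : ℝ) (hbt : btil = b - ∑ j ∈ P, a j)
    (h0 : 0 < btil) (h1 : btil < 1)
    (ψ ψw : ℝ → ℝ)
    (hψ : ∀ t, ψ t = (⌊t⌋ : ℝ) + min 1 (Int.fract t / Int.fract btil))
    (hψw : ∀ t, ψw t = (⌊t⌋ : ℝ)
      + min 1 (Int.fract t / Int.fract (b - ∑ j ∈ PW, a j)))
    (x : ι → ℝ) (hx : ∀ j ∈ insert r J, 0 ≤ x j ∧ x j ≤ 1)
    (hcmir : x r + ∑ j ∈ J \ P, ψ (a j) * x j - ∑ j ∈ P, ψ (-a j) * x j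
      ≥ 1 - ∑ j ∈ P, ψ (-a j)) :
    x r + ∑ j ∈ PZ, a j * x j + ∑ j ∈ J \ P, ψw (a j) * x j
      ≥ (⌈b - ∑ j ∈ PW, a j⌉ : ℝ) := by
  classical
  have hint : ∀ j ∈ PZ, ∃ zz : ℤ, a j = (zz : ℝ) := by
    intro j hj
    rw [hPZ, Finset.mem_sdiff] at hj
    by_contra h
    exact hj.2 ((hPWspec j hj.1).mpr h)
  choose! z hz using hint
  have hsum : ∑ j ∈ PZ, a j = ((∑ j ∈ PZ, z j : ℤ) : ℝ) := by
    push_cast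
    exact Finset.sum_congr rfl hz
  set m : ℤ := ∑ j ∈ PZ, z j with hm
  have hsplit : ∑ j ∈ PZ, a j + ∑ j ∈ PW, a j = ∑ j ∈ P, a j := by
    rw [hPZ]; exact Finset.sum_sdiff hPWsub
  have hbeta : b - ∑ j ∈ PW, a j = btil + (m : ℝ) := by
    rw [hbt, ← hsplit, ← hsum]; ring
  have hceil : (⌈b - ∑ j ∈ PW, a j⌉ : ℝ) = 1 + (m : ℝ) := by
    rw [hbeta, Int.ceil_add_intCast]
    have h1' : ⌈btil⌉ = 1 := by
      rw [Int.ceil_eq_iff]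
      constructor
      · push_cast; linarith
      · push_cast; linarith
    push_cast [h1']
    ring
  have hfreq : Int.fract (b - ∑ j ∈ PW, a j) = Int.fract btil := by
    rw [hbeta, Int.fract_add_intCast]
  have hψeq : ∀ t, ψw t = ψ t := by
    intro t; rw [hψ, hψw, hfreq]
  have hZ : ∀ j ∈ PZ, ψ (-a j) = -a j := by
    intro j hj
    rw [hψ, hz j hj, ← Int.cast_neg, Int.fract_intCast, Int.floor_intCast]
    simp
  have hW : ∀ j ∈ PW, ψ (-a j) ≤ 0 := by
    intro j hj
    have hjP := hPWsub hj
    have hnotint := (hPWspec j hjP).mp hj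
    have hpos : 0 < a j := by
      rcases lt_or_eq_of_le (ha j (hP hjP)) with h | h
      · exact h
      · exact absurd ⟨0, by simp [← h]⟩ hnotint
    have hfl : (⌊-a j⌋ : ℝ) ≤ -1 := by
      have hlt : ⌊-a j⌋ < 0 := by
        rw [Int.floor_lt]
        push_cast; linarith
      have : ⌊-a j⌋ ≤ -1 := by omega
      exact_mod_cast this
    have hmin : min 1 (Int.fract (-a j) / Int.fract btil) ≤ 1 := min_le_left _ _
    rw [hψ]; linarith
  -- split sums over P
  have hPx : ∑ j ∈ P, ψ (-a j) * x j
      = ∑ j ∈ PZ, ψ (-a j) * x j + ∑ j ∈ PW, ψ (-a j) * x j := by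
    rw [hPZ]; exact (Finset.sum_sdiff hPWsub).symm
  have hP1 : ∑ j ∈ P, ψ (-a j) = ∑ j ∈ PZ, ψ (-a j) + ∑ j ∈ PW, ψ (-a j) := by
    rw [hPZ]; exact (Finset.sum_sdiff hPWsub).symm
  have hZx : ∑ j ∈ PZ, ψ (-a j) * x j = -∑ j ∈ PZ, a j * x j := by
    rw [← Finset.sum_neg_distrib]
    refine Finset.sum_congr rfl fun j hj => ?_
    rw [hZ j hj]; ring
  have hZ1 : ∑ j ∈ PZ, ψ (-a j) = -(m : ℝ) := by
    rw [← hsum, ← Finset.sum_neg_distrib]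
    exact Finset.sum_congr rfl fun j hj => hZ j hj
  have hWpos : 0 ≤ ∑ j ∈ PW, ψ (-a j) * x j - ∑ j ∈ PW, ψ (-a j) := by
    rw [← Finset.sum_sub_distrib]
    refine Finset.sum_nonneg fun j hj => ?_
    have hxj := hx j (Finset.mem_insert_of_mem (hP (hPWsub hj)))
    have := hW j hj
    nlinarith [hxj.2]
  have hgoalsum : ∑ j ∈ J \ P, ψw (a j) * x j = ∑ j ∈ J \ P, ψ (a j) * x j := by
    exact Finset.sum_congr rfl fun j _ => by rw [hψeq]
  rw [hceil, hgoalsum]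
  rw [hPx, hP1, hZx, hZ1] at hcmir
  linarith
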